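/- Let A be a reduced Noetherian local commutative ring which is infinite (as a set), and let I be an ideal of A such that the quotient A/I is finite. Let K denote the total ring of fractions of A, i.e., the localization of A at the multiplicative set of non-zero-divisors of A. Then the extension of I to K is the unit ideal, i.e., the ideal of K generated by the image of I under the canonical map A → K equals K; equivalently, (A/I) ⊗_A K = 0, i.e., the localization of the A-module A/I at the non-zero-divisors of A is the zero module. -/

import Mathlib

/-- Lemma `lem4` of Berger–Klosin: let `A` be a reduced Noetherian local
commutative ring which is infinite, and `I` an ideal of `A` with `A/I` finite.  Then the
extension of `I` to the total ring of fractions `K` of `A` (the localization of `A` at its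
non-zero-divisors) is the unit ideal. -/
theorem map_totalFractionRing_eq_top_of_finite_quotient
    {A : Type*} [CommRing A] [IsLocalRing A] [IsReduced A] [IsNoetherianRing A] [Infinite A]
    (I : Ideal A) (hI : Finite (A ⧸ I)) :
    Ideal.map (algebraMap A (Localization (nonZeroDivisors A))) I = ⊤ := by
  classical
  -- nilradical is zero, and equals the inf of minimal primes
  have hnil : sInf (minimalPrimes A) = ⊥ := by
    rw [minimalPrimes, Ideal.sInf_minimalPrimes]
    exact nilradical_eq_zero A
  -- I contains a non-zero-divisor
  have hx : ∃ x ∈ I, x ∈ nonZeroDivisors A := by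
    by_contra h
    push_neg at h
    -- every element of I lies in some minimal prime
    have hsub : (I : Set A) ⊆ ⋃ p ∈ ((minimalPrimes.finite_of_isNoetherianRing A).toFinset :
        Set (Ideal A)), (p : Set A) := by
      intro x hxI
      obtain ⟨y, hy, hy0⟩ : ∃ y, y * x = 0 ∧ y ≠ 0 := by
        have := h x hxI
        rw [mem_nonZeroDivisors_iff_right] at this
        push_neg at this
        exact this
      have : ¬ y ∈ sInf (minimalPrimes A) := by rw [hnil]; exact hy0
      rw [Submodule.mem_sInf] at this
      push_neg at this
      obtain ⟨p, hp, hyp⟩ := this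
      have hp' : Ideal.IsPrime p := hp.1.1
      have : y * x ∈ p := hy ▸ p.zero_mem
      have hxp : x ∈ p := ((hp'.mem_or_mem this).resolve_left hyp)
      exact Set.mem_biUnion (by simpa using hp) hxp
    -- prime avoidance
    obtain ⟨p, hps, hIp⟩ := (Ideal.subset_union_prime (f := id) ⊥ ⊥
      (fun i hi _ _ => by
        have : i ∈ minimalPrimes A := by simpa using hi
        exact this.1.1)).mp hsub
    have hp : p ∈ minimalPrimes A := by simpa using hps
    have hp' : p.IsPrime := hp.1.1
    -- A/p is a finite integral domain, hence a field, so p is maximal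
    have hfin : Finite (A ⧸ p) := by
      refine Finite.of_surjective (Ideal.Quotient.factor hIp) ?_
      intro b
      obtain ⟨a, rfl⟩ := Ideal.Quotient.mk_surjective b
      exact ⟨Ideal.Quotient.mk I a, rfl⟩
    have hmax : p.IsMaximal := by
      have : IsDomain (A ⧸ p) := Ideal.Quotient.isDomain p
      have : Fintype (A ⧸ p) := Fintype.ofFinite _
      exact Ideal.Quotient.maximal_of_isField p (Finite.isField_of_domain (A ⧸ p))
    -- p is the unique prime ideal, so p = nilradical = 0
    have hple : ∀ q : Ideal A, q.IsPrime → p ≤ q := by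
      intro q hq
      have hqm : q ≤ p := (IsLocalRing.eq_maximalIdeal hmax) ▸ IsLocalRing.le_maximalIdeal hq.ne_top
      exact hp.2 ⟨hq, bot_le⟩ hqm
    have hpbot : p = ⊥ := by
      rw [← hnil]
      exact le_antisymm (le_sInf (fun q hq => hple q hq.1.1)) (sInf_le hp)
    -- then I = ⊥, so A/I ≃ A is infinite, contradiction
    have hIbot : I = ⊥ := le_bot_iff.mp (hpbot ▸ hIp)
    have : Function.Injective (Ideal.Quotient.mk I) := by
      rw [RingHom.injective_iff_ker_eq_bot, Ideal.mk_ker, hIbot]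
    have : Infinite (A ⧸ I) := Infinite.of_injective _ this
    exact absurd hI (by rw [← not_infinite_iff_finite]; exact fun _ => this.not_finite ‹Finite _›)
  obtain ⟨x, hxI, hxnzd⟩ := hx
  have : IsUnit (algebraMap A (Localization (nonZeroDivisors A)) x) :=
    IsLocalization.map_units _ ⟨x, hxnzd⟩
  exact Ideal.eq_top_of_isUnit_mem _ (Ideal.mem_map_of_mem _ hxI) this
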